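/- Let λ ∈ ℝ and let g : ℝ → M_n(ℝ) be a differentiable matrix function with g(ξ) symmetric for all ξ and satisfying g'(ξ) = J_n(λ)·g(ξ). Then there exist constants C₁, …, C_n ∈ ℝ such that g(ξ) is the Hankel matrix with entries X_i(ξ) = e^{λξ} ∑_{j=0}^{n−i} (ξ^j / j!) C_{i+j} on the antidiagonals, i.e., g(ξ)_{kl} = X_{k+l−1}(ξ) for k+l ≤ n+1 and 0 otherwise. -/

import Mathlib

/-- The `n × n` Jordan cell with eigenvalue `l`. -/
def JordanCell (n : ℕ) (l : ℝ) : Matrix (Fin n) (Fin n) ℝ :=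
  Matrix.of fun i j => if i = j then l else if (i : ℕ) + 1 = (j : ℕ) then 1 else 0

lemma aux_sum_deriv (m : ℕ) (c : ℕ → ℝ) (t : ℝ) :
    HasDerivAt (fun x : ℝ => ∑ j ∈ Finset.range m, x ^ j / (Nat.factorial j) * c j)
      (∑ j ∈ Finset.range (m - 1), t ^ j / (Nat.factorial j) * c (j + 1)) t := by
  have h1 : HasDerivAt (fun x : ℝ => ∑ j ∈ Finset.range m, x ^ j / (Nat.factorial j) * c j)
      (∑ j ∈ Finset.range m, (j : ℝ) * t ^ (j - 1) / (Nat.factorial j) * c j) t := by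
    apply HasDerivAt.fun_sum
    intro j _
    exact ((hasDerivAt_pow j t).div_const _).mul_const _
  convert h1 using 1
  cases m with
  | zero => simp
  | succ m' =>
    rw [Finset.sum_range_succ']
    simp only [Nat.cast_zero, zero_mul, zero_div, add_zero]
    apply Finset.sum_congr rfl
    intro j _
    rw [Nat.factorial_succ]
    push_cast
    have hj : (Nat.factorial j : ℝ) ≠ 0 := Nat.cast_ne_zero.mpr (Nat.factorial_ne_zero j)
    field_simp

/-- A symmetric differentiable matrix function `g` with `g' = J_n(λ) g` is a Hankel
matrix whose antidiagonal entries are `X_i(ξ) = e^{λξ} ∑_{j=0}^{n−i} ξ^j/j! C_{i+j}`. -/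
theorem symm_sol_jordanCell_ode (n : ℕ) (l : ℝ)
    (g : ℝ → Matrix (Fin n) (Fin n) ℝ)
    (hsymm : ∀ ξ : ℝ, (g ξ).transpose = g ξ)
    (hode : ∀ (ξ : ℝ) (i j : Fin n),
      HasDerivAt (fun t => g t i j) ((JordanCell n l * g ξ) i j) ξ) :
    ∃ C : ℕ → ℝ, ∀ (ξ : ℝ) (k m : Fin n),
      if (k : ℕ) + (m : ℕ) < n then
        g ξ k m = Real.exp (l * ξ) *
          ∑ j ∈ Finset.range (n - ((k : ℕ) + (m : ℕ))),
            ξ ^ j / (Nat.factorial j) * C ((k : ℕ) + (m : ℕ) + j)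
      else g ξ k m = 0 := by
  classical
  rcases Nat.eq_zero_or_pos n with h0 | hn
  · exact ⟨fun _ => 0, fun ξ k m => absurd k.isLt (by omega)⟩
  -- symmetry of entries
  have hs' : ∀ (ξ : ℝ) (a b : Fin n), g ξ a b = g ξ b a := by
    intro ξ a b
    have := congrFun (congrFun (hsymm ξ) b) a
    rw [Matrix.transpose_apply] at this
    exact this
  -- entries only depend on values of indices
  have hcongr : ∀ (ξ : ℝ) (a b a' b' : Fin n),
      (a:ℕ) = (a':ℕ) → (b:ℕ) = (b':ℕ) → g ξ a b = g ξ a' b' := by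
    intro ξ a b a' b' h1 h2
    rw [Fin.ext h1, Fin.ext h2]
  -- entry of Jordan cell product
  have hmul : ∀ (ξ : ℝ) (i j : Fin n), (JordanCell n l * g ξ) i j
      = l * g ξ i j + (if h : (i:ℕ)+1 < n then g ξ ⟨(i:ℕ)+1, h⟩ j else 0) := by
    intro ξ i j
    rw [Matrix.mul_apply]
    have hterm : ∀ k : Fin n, JordanCell n l i k * g ξ k j
        = (if i = k then l * g ξ k j else 0) + (if ((i:ℕ)+1 : ℕ) = (k:ℕ) then g ξ k j else 0) := by
      intro k
      simp only [JordanCell, Matrix.of_apply]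
      by_cases h1 : i = k
      · have : ¬ ((i:ℕ)+1 = (k:ℕ)) := by subst h1; omega
        simp [h1, this]
      · by_cases h2 : (i:ℕ)+1 = (k:ℕ) <;> simp [h1, h2]
    rw [Finset.sum_congr rfl (fun k _ => hterm k), Finset.sum_add_distrib]
    congr 1
    · rw [Finset.sum_ite_eq]
      simp
    · by_cases h : (i:ℕ)+1 < n
      · rw [dif_pos h]
        rw [Finset.sum_eq_single (⟨(i:ℕ)+1, h⟩ : Fin n)]
        · simp
        · intro b _ hb
          rw [if_neg]
          intro hc
          exact hb (Fin.ext hc.symm)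
        · intro hb
          exact absurd (Finset.mem_univ _) hb
      · rw [dif_neg h]
        apply Finset.sum_eq_zero
        intro k _
        rw [if_neg]
        intro hc
        have := k.isLt
        omega
  -- the key relation from symmetry
  have hR : ∀ (ξ : ℝ) (i j : Fin n),
      (if h : (i:ℕ)+1 < n then g ξ ⟨(i:ℕ)+1, h⟩ j else 0)
      = (if h : (j:ℕ)+1 < n then g ξ i ⟨(j:ℕ)+1, h⟩ else 0) := by
    intro ξ i j
    have hfe : (fun t => g t i j) = fun t => g t j i := funext fun t => hs' t i j
    have d1 := hode ξ i j
    have d2 := hode ξ j i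
    rw [← hfe] at d2
    have huniq := d1.unique d2
    rw [hmul, hmul, hs' ξ j i] at huniq
    have hAB : (if h : (i:ℕ)+1 < n then g ξ ⟨(i:ℕ)+1, h⟩ j else 0)
        = (if h : (j:ℕ)+1 < n then g ξ ⟨(j:ℕ)+1, h⟩ i else 0) := by linarith
    rw [hAB]
    by_cases h : (j:ℕ)+1 < n
    · rw [dif_pos h, dif_pos h, hs']
    · rw [dif_neg h, dif_neg h]
  -- Hankel structure
  have hG : ∀ (ξ : ℝ) (i j : Fin n),
      g ξ i j = if h : (i:ℕ)+(j:ℕ) < n then g ξ ⟨0, hn⟩ ⟨(i:ℕ)+(j:ℕ), h⟩ else 0 := by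
    intro ξ i j
    have key : ∀ N : ℕ, ∀ i j : Fin n, (i:ℕ) ≤ N →
        g ξ i j = if h : (i:ℕ)+(j:ℕ) < n then g ξ ⟨0, hn⟩ ⟨(i:ℕ)+(j:ℕ), h⟩ else 0 := by
      intro N
      induction N with
      | zero =>
        intro i j hi
        have hi0 : (i:ℕ) = 0 := Nat.le_zero.mp hi
        rw [dif_pos (show (i:ℕ)+(j:ℕ) < n from by have := j.isLt; omega)]
        apply hcongr
        · exact hi0
        · exact (show (j:ℕ) = (i:ℕ)+(j:ℕ) from by omega)
      | succ N ih =>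
        intro i j hi
        by_cases h0 : (i:ℕ) = 0
        · rw [dif_pos (show (i:ℕ)+(j:ℕ) < n from by have := j.isLt; omega)]
          apply hcongr
          · exact h0
          · exact (show (j:ℕ) = (i:ℕ)+(j:ℕ) from by omega)
        · have hilt := i.isLt
          have hlt : ((i:ℕ)-1)+1 < n := by omega
          set i' : Fin n := ⟨(i:ℕ)-1, by omega⟩ with hi'def
          have hi'v : (i':ℕ) = (i:ℕ)-1 := rfl
          have hrel := hR ξ i' j
          rw [dif_pos (show (i':ℕ)+1 < n from hlt)] at hrel
          have hgi : g ξ i j = g ξ ⟨(i':ℕ)+1, hlt⟩ j := by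
            apply hcongr
            · exact (show (i:ℕ) = (i:ℕ)-1+1 from by omega)
            · rfl
          rw [hgi, hrel]
          by_cases hj : (j:ℕ)+1 < n
          · rw [dif_pos hj]
            have hjv : ((⟨(j:ℕ)+1, hj⟩ : Fin n):ℕ) = (j:ℕ)+1 := rfl
            rw [ih i' ⟨(j:ℕ)+1, hj⟩ (by omega)]
            by_cases hc : (i:ℕ)+(j:ℕ) < n
            · rw [dif_pos (show (i':ℕ) + ((⟨(j:ℕ)+1, hj⟩ : Fin n):ℕ) < n from by omega),
                dif_pos hc]
              apply hcongr
              · rfl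
              · exact (show (i':ℕ) + ((j:ℕ)+1) = (i:ℕ)+(j:ℕ) from by omega)
            · rw [dif_neg (show ¬ ((i':ℕ) + ((⟨(j:ℕ)+1, hj⟩ : Fin n):ℕ) < n) from by omega),
                dif_neg hc]
          · rw [dif_neg hj,
              dif_neg (show ¬ ((i:ℕ)+(j:ℕ) < n) from by have := j.isLt; omega)]
    exact key (i:ℕ) i j le_rfl
  -- the antidiagonal functions
  set X : ℕ → ℝ → ℝ := fun s ξ => if hs : s < n then g ξ ⟨0, hn⟩ ⟨s, hs⟩ else 0 with hXdef
  have hGX : ∀ (ξ : ℝ) (a b : Fin n), g ξ a b = X ((a:ℕ)+(b:ℕ)) ξ := by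
    intro ξ a b
    rw [hG ξ a b]
  -- the ODE for the antidiagonal functions
  have hXode : ∀ (s : ℕ) (ξ : ℝ), HasDerivAt (X s) (l * X s ξ + X (s+1) ξ) ξ := by
    intro s ξ
    by_cases hs : s < n
    · have e1 : X s = fun t => g t ⟨0, hn⟩ ⟨s, hs⟩ := by
        funext t
        rw [hGX t ⟨0, hn⟩ ⟨s, hs⟩,
          show ((⟨0, hn⟩ : Fin n):ℕ) + ((⟨s, hs⟩ : Fin n):ℕ) = s from Nat.zero_add s]
      have hd := hode ξ ⟨0, hn⟩ ⟨s, hs⟩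
      rw [hmul] at hd
      rw [hGX ξ ⟨0, hn⟩ ⟨s, hs⟩,
        show ((⟨0, hn⟩ : Fin n):ℕ) + ((⟨s, hs⟩ : Fin n):ℕ) = s from Nat.zero_add s] at hd
      by_cases h1 : ((⟨0, hn⟩ : Fin n):ℕ)+1 < n
      · rw [dif_pos h1, hGX ξ ⟨((⟨0, hn⟩ : Fin n):ℕ)+1, h1⟩ ⟨s, hs⟩,
          show ((⟨((⟨0, hn⟩ : Fin n):ℕ)+1, h1⟩ : Fin n):ℕ) + ((⟨s, hs⟩ : Fin n):ℕ) = s+1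
            from Nat.add_comm 1 s] at hd
        rw [← e1] at hd
        exact hd
      · rw [dif_neg h1] at hd
        have h1' : ¬ ((0:ℕ)+1 < n) := h1
        have hx1 : X (s+1) ξ = 0 := by
          simp only [hXdef]
          rw [dif_neg (show ¬ (s+1 < n) from by omega)]
        rw [← e1] at hd
        rw [hx1]
        exact hd
    · have h1 : ¬ (s + 1 < n) := by omega
      have e0 : l * X s ξ + X (s+1) ξ = 0 := by
        simp only [hXdef]
        rw [dif_neg hs, dif_neg h1]
        ring
      have e1 : X s = fun _ : ℝ => (0:ℝ) := by
        funext t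
        simp only [hXdef]
        rw [dif_neg hs]
      rw [e0, e1]
      exact hasDerivAt_const ξ 0
  -- solution formula
  have hP : ∀ (K s : ℕ), n - s ≤ K → ∀ ξ : ℝ,
      Real.exp (-(l*ξ)) * X s ξ
        = ∑ j ∈ Finset.range (n - s), ξ ^ j / (Nat.factorial j) * X (s+j) 0 := by
    intro K
    induction K with
    | zero =>
      intro s hs ξ
      have hsn : ¬ (s < n) := by omega
      simp [hXdef, hsn, Nat.sub_eq_zero_of_le (show n ≤ s from by omega)]
    | succ K ih =>
      intro s hs ξ
      by_cases hsn : s < n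
      · have hφd : ∀ t : ℝ, HasDerivAt (fun x : ℝ => Real.exp (-(l*x)) * X s x
            - ∑ j ∈ Finset.range (n - s), x ^ j / (Nat.factorial j) * X (s+j) 0) 0 t := by
          intro t
          have hexp : HasDerivAt (fun u : ℝ => Real.exp (-(l*u))) (Real.exp (-(l*t)) * (-l)) t := by
            have h' : HasDerivAt (fun u : ℝ => -(l*u)) (-l) t := by
              simpa using ((hasDerivAt_id t).const_mul l).fun_neg
            exact h'.exp
          have h1 := hexp.fun_mul (hXode s t)
          have h2 : HasDerivAt (fun x : ℝ => ∑ j ∈ Finset.range (n - s),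
              x ^ j / (Nat.factorial j) * X (s+j) 0) (Real.exp (-(l*t)) * X (s+1) t) t := by
            have haux := aux_sum_deriv (n - s) (fun j => X (s+j) 0) t
            convert haux using 1
            rw [ih (s+1) (by omega) t, show n - (s+1) = n - s - 1 from by omega]
            refine Finset.sum_congr rfl fun j _ => ?_
            show t ^ j / (Nat.factorial j) * X (s+1+j) 0
              = t ^ j / (Nat.factorial j) * X (s+(j+1)) 0
            rw [show s+1+j = s+(j+1) from by omega]
          have h3 := h1.fun_sub h2
          exact h3.congr_deriv (by ring)
        have hconst : Real.exp (-(l*ξ)) * X s ξ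
              - ∑ j ∈ Finset.range (n - s), ξ ^ j / (Nat.factorial j) * X (s+j) 0
            = Real.exp (-(l*(0:ℝ))) * X s 0
              - ∑ j ∈ Finset.range (n - s), (0:ℝ) ^ j / (Nat.factorial j) * X (s+j) 0 :=
          is_const_of_deriv_eq_zero (fun t => (hφd t).differentiableAt)
            (fun t => (hφd t).deriv) ξ 0
        have hφ0 : Real.exp (-(l*(0:ℝ))) * X s 0
            - ∑ j ∈ Finset.range (n - s), (0:ℝ) ^ j / (Nat.factorial j) * X (s+j) 0 = 0 := by
          rw [show n - s = (n - s - 1) + 1 from by omega, Finset.sum_range_succ']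
          simp
        linarith [hconst, hφ0]
      · have hs0 : n - s = 0 := by omega
        simp [hXdef, hsn, hs0]
  -- conclusion
  refine ⟨fun s => X s 0, fun ξ k m => ?_⟩
  by_cases hc : (k:ℕ)+(m:ℕ) < n
  · rw [if_pos hc, hG ξ k m, dif_pos hc, hGX ξ ⟨0, hn⟩ ⟨(k:ℕ)+(m:ℕ), hc⟩,
      show ((⟨0, hn⟩ : Fin n):ℕ) + ((⟨(k:ℕ)+(m:ℕ), hc⟩ : Fin n):ℕ) = (k:ℕ)+(m:ℕ)
        from Nat.zero_add _]
    have hp := hP n ((k:ℕ)+(m:ℕ)) (by omega) ξ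
    have key : X ((k:ℕ)+(m:ℕ)) ξ = Real.exp (l*ξ) *
        ∑ j ∈ Finset.range (n - ((k:ℕ)+(m:ℕ))),
          ξ ^ j / (Nat.factorial j) * X ((k:ℕ)+(m:ℕ)+j) 0 := by
      rw [← hp, ← mul_assoc, ← Real.exp_add]
      simp
    exact key
  · rw [if_neg hc, hG ξ k m, dif_neg hc]
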